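/- arXiv:1410.0150 — 3 statements merged into one kernel-verified Lean document; each statement's English description precedes it below -/
import Mathlib

section
/- Let $B$ be a graded integral domain over a field $k$, finitely generated and non-negatively graded with $B_0 = k$, and let $I \subseteq B_+$ be a homogeneous ideal. If the maximal degree of a minimal generator of $I$ is at least the maximal degree of a minimal first syzygy of $I$ (i.e.\ $t^B_1(I) \leq t^B_0(I)$), then $I$ is a principal ideal. -/
set_option synthInstance.maxHeartbeats 1000000
set_option maxHeartbeats 1000000
set_option linter.unusedVariables false

/-- let `B` be a finitely generated non-negatively graded domain over a field `k`
with `B₀ = k`, and `I ⊆ B₊` a homogeneous ideal.  If `t¹_B(I) ≤ t⁰_B(I)`, i.e. the syzygy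
module of a minimal homogeneous generating family of `I` is generated in degrees at most the
maximal degree of the generators, then `I` is principal. -/
theorem principal_of_syzygy_degree_le_generator_degree
    (k B : Type) [Field k] [CommRing B] [IsDomain B] [Algebra k B]
    (𝒜 : ℕ → Submodule k B) [GradedAlgebra 𝒜]
    -- `B` is finitely generated over `k`, with only `k` in degree `0`
    (hFG : (⊤ : Subalgebra k B).FG)
    (h0 : 𝒜 0 ≤ Submodule.span k {(1 : B)})
    (I : Ideal B)
    -- `I` is homogeneous and contained in `B₊`
    (hIhom : Ideal.IsHomogeneous 𝒜 I)
    (hIpos : ∀ x ∈ I, (DirectSum.decompose 𝒜 x 0 : B) = 0)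
    -- `t¹_B(I) ≤ t⁰_B(I)`: a minimal homogeneous generating family whose syzygy module is
    -- generated by homogeneous syzygies of degrees at most the top degree of a generator
    (hsyz : ∃ (r : ℕ) (f : Fin r → B) (dv : Fin r → ℕ),
      (∀ l, f l ∈ 𝒜 (dv l)) ∧ Ideal.span (Set.range f) = I ∧
      (∀ l, f l ∉ Ideal.span (f '' {l' | l' ≠ l})) ∧
      ∃ (s : ℕ) (σ : Fin s → (Fin r → B)) (tv : Fin s → ℕ),
        (∀ a, tv a ≤ Finset.univ.sup dv) ∧
        (∀ a l, if dv l ≤ tv a then σ a l ∈ 𝒜 (tv a - dv l) else σ a l = 0) ∧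
        Submodule.span B (Set.range σ) = LinearMap.ker (Fintype.linearCombination B f)) :
    Submodule.IsPrincipal I := by
  obtain ⟨r, f, dv, hf, hspan, hmin, s, σ, tv, htv, hσ, hker⟩ := hsyz
  match r, f, dv, hf, hspan, hmin, σ, hσ, hker with
  | 0, f, dv, hf, hspan, hmin, σ, hσ, hker =>
    refine ⟨0, ?_⟩
    rw [← hspan, Set.range_eq_empty, Ideal.span_empty]
    exact (Submodule.span_zero_singleton B).symm
  | 1, f, dv, hf, hspan, hmin, σ, hσ, hker =>
    refine ⟨f 0, ?_⟩
    rw [← hspan, Set.range_unique]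
    rfl
  | (n+2), f, dv, hf, hspan, hmin, σ, hσ, hker =>
    exfalso
    -- pick l0 of maximal degree
    obtain ⟨l0, -, hl0⟩ := Finset.exists_max_image Finset.univ dv ⟨0, Finset.mem_univ 0⟩
    have hsup : Finset.univ.sup dv ≤ dv l0 := Finset.sup_le fun l _ => hl0 l (Finset.mem_univ l)
    -- every syzygy generator vanishes at l0
    have hz : ∀ a, σ a l0 = 0 := by
      intro a
      have h := hσ a l0
      by_cases hle : dv l0 ≤ tv a
      · rw [if_pos hle] at h
        have heq : tv a - dv l0 = 0 := by
          have := (htv a).trans hsup; omega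
        rw [heq] at h
        obtain ⟨c, hc⟩ := Submodule.mem_span_singleton.mp (h0 h)
        by_cases hc0 : c = 0
        · rw [← hc, hc0, zero_smul]
        · exfalso
          -- σ a is a syzygy : ∑ l, σ a l • f l = 0
          have hsa : σ a ∈ LinearMap.ker (Fintype.linearCombination B f) := by
            rw [← hker]
            exact Submodule.subset_span ⟨a, rfl⟩
          have hsum : ∑ l, σ a l • f l = 0 := by
            simpa [Fintype.linearCombination_apply] using hsa
          have hsplit : (∑ l ∈ Finset.univ.erase l0, σ a l • f l) + σ a l0 • f l0 = 0 := by
            rw [Finset.sum_erase_add _ _ (Finset.mem_univ l0)]; exact hsum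
          -- f l0 ∈ span of the others
          apply hmin l0
          have hu : (c⁻¹ • (1 : B)) * (σ a l0) = 1 := by
            rw [← hc, smul_mul_smul_comm, one_mul, inv_mul_cancel₀ hc0, one_smul]
          have : f l0 = (c⁻¹ • (1 : B)) * (-(∑ l ∈ Finset.univ.erase l0, σ a l • f l)) := by
            have h1 : σ a l0 • f l0 = -(∑ l ∈ Finset.univ.erase l0, σ a l • f l) := by
              linear_combination hsplit
            calc f l0 = ((c⁻¹ • (1 : B)) * σ a l0) * f l0 := by rw [hu, one_mul]
              _ = (c⁻¹ • (1 : B)) * (σ a l0 • f l0) := by rw [smul_eq_mul]; ring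
              _ = _ := by rw [h1]
          rw [this]
          refine Ideal.mul_mem_left _ _ (neg_mem (Ideal.sum_mem _ fun l hl => ?_))
          rw [smul_eq_mul]
          refine Ideal.mul_mem_left _ _ (Ideal.subset_span ?_)
          exact ⟨l, Finset.ne_of_mem_erase hl, rfl⟩
      · rw [if_neg hle] at h; exact h
    -- pick l1 ≠ l0 and form the Koszul syzygy
    obtain ⟨l1, hl1⟩ := exists_ne l0
    set τ : Fin (n+2) → B := Pi.single l0 (f l1) - Pi.single l1 (f l0) with hτ
    have hτker : τ ∈ LinearMap.ker (Fintype.linearCombination B f) := by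
      rw [LinearMap.mem_ker, hτ, map_sub, Fintype.linearCombination_apply_single,
        Fintype.linearCombination_apply_single, smul_eq_mul, smul_eq_mul, mul_comm, sub_self]
    rw [← hker] at hτker
    -- but every element of the span vanishes at l0
    have hK : Submodule.span B (Set.range σ) ≤
        LinearMap.ker (LinearMap.proj l0 : (Fin (n+2) → B) →ₗ[B] B) := by
      rw [Submodule.span_le]
      rintro _ ⟨a, rfl⟩
      exact hz a
    have hτ0 : τ l0 = 0 := hK hτker
    have : f l1 = 0 := by
      have := hτ0
      rw [hτ, Pi.sub_apply, Pi.single_eq_same, Pi.single_eq_of_ne (Ne.symm hl1), sub_zero] at this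
      exact this
    exact hmin l1 (by rw [this]; exact Ideal.zero_mem _)
end

section
/- Let $B$ be a standard graded polynomial ring over a field $k$, $C \subseteq B$ a graded subring such that the inclusion $C \hookrightarrow B$ is split as a map of $C$-modules, and set $I := C_+ B$ (the ideal of $B$ generated by elements of $C$ of positive degree). Let $e := \sup\{j : (B/I)_j \neq 0\}$ and suppose $e < \infty$. Then for any set of homogeneous algebra generators of $C$, the subset consisting of those generators of degree at most $e + 1$ already generates $C$ as a $k$-algebra. -/
set_option synthInstance.maxHeartbeats 1000000
set_option maxHeartbeats 1000000
open MvPolynomial Pointwise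

section Aux

variable {σ R : Type*} [CommSemiring R]

private lemma Finsupp.degree_add' (a b : σ →₀ ℕ) :
    (a + b).degree = a.degree + b.degree := by
  simp [Finsupp.degree_eq_weight_one, map_add]

private lemma hcomp_mul_left {g x : MvPolynomial σ R} {a m : ℕ} (hg : g.IsHomogeneous a) :
    homogeneousComponent (a + m) (g * x) = g * homogeneousComponent m x := by
  classical
  ext u
  rw [coeff_homogeneousComponent, coeff_mul, coeff_mul]
  by_cases h : u.degree = a + m
  · rw [if_pos h]
    refine Finset.sum_congr rfl fun vw hvw => ?_
    rw [coeff_homogeneousComponent]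
    by_cases hv : coeff vw.1 g = 0
    · simp [hv]
    · have hva : vw.1.degree = a := by
        by_contra hne; exact hv (hg.coeff_eq_zero hne)
      have hsum : vw.1 + vw.2 = u := Finset.HasAntidiagonal.mem_antidiagonal.mp hvw
      have hdeg := Finsupp.degree_add' vw.1 vw.2
      rw [hsum, hva] at hdeg
      have hw : vw.2.degree = m := by omega
      rw [if_pos hw]
  · rw [if_neg h]
    symm
    refine Finset.sum_eq_zero fun vw hvw => ?_
    rw [coeff_homogeneousComponent]
    by_cases hv : coeff vw.1 g = 0
    · simp [hv]
    · have hva : vw.1.degree = a := by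
        by_contra hne; exact hv (hg.coeff_eq_zero hne)
      have hsum : vw.1 + vw.2 = u := Finset.HasAntidiagonal.mem_antidiagonal.mp hvw
      have hdeg := Finsupp.degree_add' vw.1 vw.2
      rw [hsum, hva] at hdeg
      have hw : vw.2.degree ≠ m := by omega
      rw [if_neg hw, mul_zero]

private lemma hcomp_mul_left' {g x : MvPolynomial σ R} {a N : ℕ} (hg : g.IsHomogeneous a)
    (h : a ≤ N) : homogeneousComponent N (g * x) = g * homogeneousComponent (N - a) x := by
  obtain ⟨m, rfl⟩ : ∃ m, N = a + m := ⟨N - a, by omega⟩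
  rw [hcomp_mul_left hg, Nat.add_sub_cancel_left]

private lemma hcomp_mul_left_zero {g x : MvPolynomial σ R} {a N : ℕ} (hg : g.IsHomogeneous a)
    (h : N < a) : homogeneousComponent N (g * x) = 0 := by
  classical
  ext u
  rw [coeff_homogeneousComponent, coeff_zero]
  by_cases hu : u.degree = N
  · rw [if_pos hu, coeff_mul]
    refine Finset.sum_eq_zero fun vw hvw => ?_
    by_cases hv : coeff vw.1 g = 0
    · simp [hv]
    · have hva : vw.1.degree = a := by
        by_contra hne; exact hv (hg.coeff_eq_zero hne)
      have hsum : vw.1 + vw.2 = u := Finset.HasAntidiagonal.mem_antidiagonal.mp hvw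
      have hdeg := Finsupp.degree_add' vw.1 vw.2
      rw [hsum, hva] at hdeg
      omega
  · rw [if_neg hu]

end Aux

/-- let `B = k[x₁,…,xₙ]` be standard graded, `C ⊆ B` a graded subring such that
the inclusion `C ↪ B` is split as a map of `C`-modules, `I := C₊B` and
`e := end (B/I) < ∞`. Then for any set of homogeneous algebra generators of `C`, the subset
of generators of degree at most `e + 1` already generates `C` as a `k`-algebra. -/
theorem generators_in_degrees_up_to_e_plus_one
    (k : Type) [Field k] (n : ℕ) (C : Subalgebra k (MvPolynomial (Fin n) k))
    -- `C` is a graded (homogeneous) subalgebra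
    (hCgraded : ∀ c ∈ C, ∀ d : ℕ, homogeneousComponent d c ∈ C)
    -- the inclusion `C ↪ B` is split over `C`
    (hsplit : ∃ π : MvPolynomial (Fin n) k →ₗ[↥C] ↥C, ∀ c : ↥C, π (c : MvPolynomial (Fin n) k) = c)
    -- `I := C₊ B` and `e` bounds the end of `B/I`:
    (e : ℕ)
    (he : ∀ j : ℕ, e < j → ∀ p : MvPolynomial (Fin n) k, p.IsHomogeneous j →
      p ∈ Ideal.span ((C : Set (MvPolynomial (Fin n) k)) ∩ {b | constantCoeff b = 0}))
    -- a set of homogeneous algebra generators of `C`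
    (S : Set (MvPolynomial (Fin n) k)) (hSC : S ⊆ (C : Set (MvPolynomial (Fin n) k)))
    (hShom : ∀ s ∈ S, ∃ d : ℕ, s.IsHomogeneous d)
    (hSgen : Algebra.adjoin k S = C) :
    Algebra.adjoin k {s ∈ S | ∃ d ≤ e + 1, s.IsHomogeneous d} = C := by
  classical
  obtain ⟨π, hπ⟩ := hsplit
  set Slow : Set (MvPolynomial (Fin n) k) := {s ∈ S | ∃ d ≤ e + 1, s.IsHomogeneous d} with hSlow
  set D : Subalgebra k (MvPolynomial (Fin n) k) := Algebra.adjoin k Slow with hD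
  have hDC : D ≤ C := by
    rw [← hSgen]
    exact Algebra.adjoin_mono fun s hs => hs.1
  -- every element of the monoid closure of `S` is homogeneous, lies in `C`, and lies in `D`
  -- as soon as its degree is at most `e + 1`
  have hclos : ∀ m ∈ Submonoid.closure S,
      m ∈ C ∧ ∃ dm : ℕ, m.IsHomogeneous dm ∧ (dm ≤ e + 1 → m ∈ D) := by
    intro m hm
    induction hm using Submonoid.closure_induction with
    | mem s hs =>
      obtain ⟨d, hd⟩ := hShom s hs
      exact ⟨hSC hs, d, hd, fun hle => Algebra.subset_adjoin ⟨hs, d, hle, hd⟩⟩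
    | one => exact ⟨one_mem C, 0, isHomogeneous_one _ _, fun _ => one_mem D⟩
    | mul x y hx hy ihx ihy =>
      obtain ⟨hxC, dx, hdx, hx'⟩ := ihx
      obtain ⟨hyC, dy, hdy, hy'⟩ := ihy
      exact ⟨mul_mem hxC hyC, dx + dy, hdx.mul hdy,
        fun hle => mul_mem (hx' (by omega)) (hy' (by omega))⟩
  -- low-degree homogeneous components of elements of `adjoin k S` lie in `D`
  have hbase : ∀ d ≤ e + 1, ∀ p ∈ Submodule.span k (Submonoid.closure S : Set (MvPolynomial (Fin n) k)),
      homogeneousComponent d p ∈ D := by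
    intro d hd p hp
    induction hp using Submodule.span_induction with
    | mem m hm =>
      obtain ⟨_, dm, hdm, hmem⟩ := hclos m hm
      rw [homogeneousComponent_of_mem ((mem_homogeneousSubmodule _ _).mpr hdm)]
      split_ifs with hdm'
      · exact hmem (by omega)
      · exact zero_mem D
    | zero => simpa using zero_mem D
    | add x y _ _ ihx ihy => rw [map_add]; exact add_mem ihx ihy
    | smul c x _ ih => rw [map_smul]; exact D.smul_mem ih c
  -- membership in adjoin S ↔ span of closure
  have hspan : ∀ p : MvPolynomial (Fin n) k, p ∈ C → p ∈ Submodule.span k (Submonoid.closure S : Set (MvPolynomial (Fin n) k)) := by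
    intro p hp
    rw [← hSgen] at hp
    rw [← Algebra.adjoin_eq_span]
    exact hp
  -- the set of homogeneous positive-degree elements of `C`
  set G' : Set (MvPolynomial (Fin n) k) := {g | g ∈ C ∧ ∃ a : ℕ, 0 < a ∧ g.IsHomogeneous a} with hG'
  have he' : ∀ j, e < j → ∀ p : MvPolynomial (Fin n) k, p.IsHomogeneous j → p ∈ Ideal.span G' := by
    intro j hj p hp
    have hle : Ideal.span ((C : Set (MvPolynomial (Fin n) k)) ∩ {b | constantCoeff b = 0}) ≤ Ideal.span G' := by
      rw [Ideal.span_le]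
      rintro g ⟨hgC, hg0⟩
      show g ∈ Ideal.span G'
      rw [← sum_homogeneousComponent g]
      apply Ideal.sum_mem
      intro i _
      by_cases hi0 : i = 0
      · subst hi0
        rw [homogeneousComponent_zero]
        have hc0 : coeff 0 g = 0 := by
          have := hg0
          rwa [Set.mem_setOf_eq, constantCoeff_eq] at this
        rw [hc0, map_zero]
        exact zero_mem _
      · exact Ideal.subset_span
          ⟨hCgraded g hgC i, i, Nat.pos_of_ne_zero hi0, homogeneousComponent_isHomogeneous i g⟩
    exact hle (he j hj p hp)
  -- main lemma: every homogeneous element of `C` lies in `D`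
  have main : ∀ d : ℕ, ∀ c : MvPolynomial (Fin n) k, c ∈ C → c.IsHomogeneous d → c ∈ D := by
    intro d
    induction d using Nat.strong_induction_on with
    | _ d IH =>
    intro c hcC hchom
    have hcc : homogeneousComponent d c = c := by
      rw [homogeneousComponent_of_mem ((mem_homogeneousSubmodule _ _).mpr hchom), if_pos rfl]
    by_cases hdle : d ≤ e + 1
    · have h1 : homogeneousComponent d c ∈ D := hbase d hdle c (hspan c hcC)
      rwa [hcc] at h1
    · push_neg at hdle
      -- `e + 1 < d`
      have hd1 : 1 ≤ d := by omega
      -- Step 1: `c ∈ Ideal.span ((range X) * G')`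
      have hmem : c ∈ Ideal.span (Set.range (X : Fin n → MvPolynomial (Fin n) k) * G') := by
        rw [← Ideal.span_mul_span']
        rw [as_sum c]
        apply Ideal.sum_mem
        intro m hm
        have hmd : m.degree = d := by
          by_contra hne
          exact mem_support_iff.mp hm (hchom.coeff_eq_zero hne)
        have hm0 : m ≠ 0 := by
          intro h0
          rw [h0, map_zero] at hmd
          omega
        obtain ⟨i, hi⟩ : ∃ i, m i ≠ 0 := by
          by_contra hall
          push_neg at hall
          exact hm0 (Finsupp.ext hall)
        have hle : Finsupp.single i 1 ≤ m := by
          rw [Finsupp.single_le_iff]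
          omega
        set m' := m - Finsupp.single i 1 with hm'
        have hmm : Finsupp.single i 1 + m' = m := by
          rw [hm']
          exact add_tsub_cancel_of_le hle
        have hmono : (monomial m) (coeff m c) = X i * (monomial m') (coeff m c) := by
          rw [X, monomial_mul, one_mul, hmm]
        have hdm' : m'.degree = d - 1 := by
          have hda := Finsupp.degree_add' (Finsupp.single i 1) m'
          rw [hmm] at hda
          have hs : (Finsupp.single i 1).degree = 1 := by
            rw [Finsupp.degree_single]
          omega
        have hmh : ((monomial m') (coeff m c)).IsHomogeneous (d - 1) :=
          isHomogeneous_monomial _ hdm'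
        have hms : (monomial m') (coeff m c) ∈ Ideal.span G' := he' (d - 1) (by omega) _ hmh
        rw [hmono]
        exact Ideal.mul_mem_mul (Ideal.subset_span ⟨i, rfl⟩) hms
      obtain ⟨f, hfsupp, hfsum⟩ := Submodule.mem_span_set.mp hmem
      have hrep : c = ∑ p ∈ f.support, f p * p := by
        rw [← hfsum]
        simp [Finsupp.sum, smul_eq_mul]
      -- the auxiliary submodule `W`
      set W : Submodule k (MvPolynomial (Fin n) k) := Submodule.span k
        {b | ∃ (β g : MvPolynomial (Fin n) k) (a : ℕ), 0 < a ∧ a < d ∧ g ∈ C ∧ g.IsHomogeneous a ∧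
          β.IsHomogeneous (d - a) ∧ b = β * g} with hW
      have hcW : c ∈ W := by
        have h2 : c = ∑ p ∈ f.support, homogeneousComponent d (f p * p) := by
          calc c = homogeneousComponent d c := hcc.symm
          _ = homogeneousComponent d (∑ p ∈ f.support, f p * p) := by rw [← hrep]
          _ = ∑ p ∈ f.support, homogeneousComponent d (f p * p) := map_sum _ _ _
        rw [h2]
        apply Submodule.sum_mem
        intro p hp
        obtain ⟨x, hx, g, hg, hxg⟩ := hfsupp hp
        obtain ⟨i, rfl⟩ := hx
        obtain ⟨hgC, a, ha, hgh⟩ := hg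
        have hβ : f p * p = g * (f p * X i) := by
          rw [← hxg]; ring
        rw [hβ]
        rcases lt_or_ge d a with hlt | hge
        · rw [hcomp_mul_left_zero hgh hlt]
          exact zero_mem W
        · rw [hcomp_mul_left' hgh hge]
          rcases eq_or_lt_of_le hge with heq | hlt'
          · have h0 : homogeneousComponent (d - a) (f p * X i) = 0 := by
              have hza : d - a = 0 := by omega
              rw [hza, homogeneousComponent_zero]
              have hcc0 : coeff 0 (f p * X i) = 0 := by
                have : constantCoeff (f p * X i) = 0 := by
                  rw [map_mul, constantCoeff_X, mul_zero]
                rwa [constantCoeff_eq] at this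
              rw [hcc0, map_zero]
            rw [h0, mul_zero]
            exact zero_mem W
          · refine Submodule.subset_span ?_
            refine ⟨homogeneousComponent (d - a) (f p * X i), g, a, ha, hlt', hgC, hgh,
              homogeneousComponent_isHomogeneous _ _, ?_⟩
            ring
      -- the linear map `Φ := homogeneousComponent d ∘ incl ∘ π`
      set Φ : MvPolynomial (Fin n) k →ₗ[k] MvPolynomial (Fin n) k :=
        (homogeneousComponent d).comp ((C.val.toLinearMap).comp (π.restrictScalars k)) with hΦ
      have hΦc : Φ c = c := by
        have h1 : π c = ⟨c, hcC⟩ := hπ ⟨c, hcC⟩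
        show homogeneousComponent d (C.val (π c)) = c
        rw [h1]
        exact hcc
      have hgen : ∀ b ∈ {b | ∃ (β g : MvPolynomial (Fin n) k) (a : ℕ), 0 < a ∧ a < d ∧ g ∈ C ∧ g.IsHomogeneous a ∧
          β.IsHomogeneous (d - a) ∧ b = β * g}, Φ b ∈ Subalgebra.toSubmodule D := by
        rintro b ⟨β, g, a, ha, had, hgC, hgh, hβh, rfl⟩
        have h1 : π (β * g) = ⟨g, hgC⟩ * π β := by
          have hs : β * g = (⟨g, hgC⟩ : ↥C) • β := by
            rw [Algebra.smul_def]
            show β * g = (Subalgebra.val C) ⟨g, hgC⟩ * β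
            simp [mul_comm]
          rw [hs, map_smul, smul_eq_mul]
        have h2 : Φ (β * g) = homogeneousComponent d (g * (π β).1) := by
          show homogeneousComponent d (C.val (π (β * g))) = _
          rw [h1, map_mul]
          rfl
        rw [h2, hcomp_mul_left' hgh (le_of_lt had)]
        show g * homogeneousComponent (d - a) (π β).1 ∈ D
        refine mul_mem (IH a had g hgC hgh) (IH (d - a) (by omega) _ ?_ ?_)
        · exact hCgraded _ (π β).2 (d - a)
        · exact homogeneousComponent_isHomogeneous _ _
      have hfin : Φ c ∈ Subalgebra.toSubmodule D := by
        have himg : Submodule.map Φ W ≤ Subalgebra.toSubmodule D := by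
          rw [hW, Submodule.map_span, Submodule.span_le]
          rintro b ⟨b', hb', rfl⟩
          exact hgen b' hb'
        exact himg ⟨c, hcW, rfl⟩
      rw [hΦc] at hfin
      exact hfin
  -- conclusion
  refine le_antisymm hDC ?_
  intro c hc
  have hc2 := hspan c hc
  clear hc
  induction hc2 using Submodule.span_induction with
  | mem m hm =>
    obtain ⟨hmC, dm, hdm, _⟩ := hclos m hm
    exact main dm m hmC hdm
  | zero => exact zero_mem D
  | add x y _ _ ihx ihy => exact add_mem ihx ihy
  | smul r x _ ih => exact D.smul_mem ih r
end

section
/- Let $B$ be a standard graded polynomial ring over a field $k$ that is an integral domain of Krull dimension at least 2, $C \subseteq B$ a graded subring with the inclusion split over $C$, and $I := C_+ B$ with $e := \sup\{j : (B/I)_j \neq 0\} < \infty$. If moreover $t^B_1(I) \leq e + 1$, then any set of homogeneous algebra generators of $C$ contains a generating subset consisting of elements of degree at most $e$. -/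
set_option synthInstance.maxHeartbeats 1000000
set_option maxHeartbeats 4000000

open MvPolynomial

section Aux

variable {k : Type} [Field k] {n : ℕ}

private lemma degAdd (u v : Fin n →₀ ℕ) : (u + v).degree = u.degree + v.degree := by
  simp [Finsupp.degree_eq_weight_one, map_add]

private lemma degOf {p : MvPolynomial (Fin n) k} {a : ℕ} (hp : p.IsHomogeneous a)
    {v : Fin n →₀ ℕ} (h : coeff v p ≠ 0) : v.degree = a := by
  rw [Finsupp.degree_eq_weight_one]; exact hp h

private lemma eqC_of_hom0 {p : MvPolynomial (Fin n) k} (hp : p.IsHomogeneous 0) :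
    p = C (constantCoeff p) := by
  have h := homogeneousComponent_of_mem ((mem_homogeneousSubmodule 0 p).2 hp) (m := 0)
  rw [if_pos rfl] at h
  conv_lhs => rw [← h, homogeneousComponent_zero]
  rfl

private lemma ccZero_of_homPos {p : MvPolynomial (Fin n) k} {a : ℕ} (hp : p.IsHomogeneous a)
    (ha : a ≠ 0) : constantCoeff p = 0 := by
  by_contra h
  have : (0 : Fin n →₀ ℕ).degree = a := degOf hp h
  rw [map_zero] at this
  exact ha this.symm

private lemma comp_same {p : MvPolynomial (Fin n) k} {a : ℕ} (hp : p.IsHomogeneous a) :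
    homogeneousComponent a p = p := by
  have h := homogeneousComponent_of_mem ((mem_homogeneousSubmodule a p).2 hp) (m := a)
  rwa [if_pos rfl] at h

private lemma comp_mul {p : MvPolynomial (Fin n) k} {a : ℕ} (hp : p.IsHomogeneous a)
    (z : MvPolynomial (Fin n) k) (d : ℕ) :
    homogeneousComponent d (p * z) =
      if a ≤ d then p * homogeneousComponent (d - a) z else 0 := by
  split_ifs with had
  · ext m
    rw [coeff_homogeneousComponent, coeff_mul, coeff_mul]
    split_ifs with hm
    · refine Finset.sum_congr rfl fun x hx => ?_
      rw [Finset.HasAntidiagonal.mem_antidiagonal] at hx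
      by_cases hc : coeff x.1 p = 0
      · rw [hc, zero_mul, zero_mul]
      · have h1 : x.1.degree = a := degOf hp hc
        have h2 : x.2.degree = d - a := by
          have := degAdd x.1 x.2
          rw [hx, hm, h1] at this; omega
        rw [coeff_homogeneousComponent, if_pos h2]
    · symm
      refine Finset.sum_eq_zero fun x hx => ?_
      rw [Finset.HasAntidiagonal.mem_antidiagonal] at hx
      by_cases hc : coeff x.1 p = 0
      · rw [hc, zero_mul]
      · rw [coeff_homogeneousComponent]
        have h1 : x.1.degree = a := degOf hp hc
        rw [if_neg ?_, mul_zero]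
        intro h2
        apply hm
        have := degAdd x.1 x.2
        rw [hx, h1, h2] at this; omega
  · ext m
    rw [coeff_homogeneousComponent, coeff_zero]
    split_ifs with hm
    · rw [coeff_mul]
      refine Finset.sum_eq_zero fun x hx => ?_
      rw [Finset.HasAntidiagonal.mem_antidiagonal] at hx
      by_cases hc : coeff x.1 p = 0
      · rw [hc, zero_mul]
      · exfalso
        have h1 : x.1.degree = a := degOf hp hc
        have := degAdd x.1 x.2
        rw [hx, hm, h1] at this; omega
    · rfl

end Aux

/-- let `B = k[x₁,…,xₙ]` (`n ≥ 2`, so `B` is a domain of Krull dimension `≥ 2`)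
be standard graded, `C ⊆ B` a graded subring with the inclusion split over `C`, `I := C₊B`,
`e := end (B/I) < ∞`.  If moreover `t¹_B(I) ≤ e + 1` (the ideal `I` has a homogeneous
generating family whose syzygy module is generated by homogeneous syzygies of degree at most
`e + 1`), then any set of homogeneous algebra generators of `C` contains a generating subset
of elements of degree at most `e`. -/
theorem generators_in_degrees_up_to_e
    (k : Type) [Field k] (n : ℕ) (hn : 2 ≤ n) (C : Subalgebra k (MvPolynomial (Fin n) k))
    -- `C` is a graded (homogeneous) subalgebra
    (hCgraded : ∀ c ∈ C, ∀ d : ℕ, homogeneousComponent d c ∈ C)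
    -- the inclusion `C ↪ B` is split over `C`
    (hsplit : ∃ π : MvPolynomial (Fin n) k →ₗ[↥C] ↥C, ∀ c : ↥C, π (c : MvPolynomial (Fin n) k) = c)
    (e : ℕ)
    (I : Ideal (MvPolynomial (Fin n) k))
    (hI : I = Ideal.span ((C : Set (MvPolynomial (Fin n) k)) ∩ {b | constantCoeff b = 0}))
    -- `e` bounds the end of `B/I`
    (he : ∀ j : ℕ, e < j → ∀ p : MvPolynomial (Fin n) k, p.IsHomogeneous j → p ∈ I)
    -- `t¹_B(I) ≤ e + 1`: some homogeneous generating family of `I` has its syzygy module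
    -- generated by homogeneous syzygies of degrees at most `e + 1`
    (hsyz : ∃ (r : ℕ) (f : Fin r → MvPolynomial (Fin n) k) (dv : Fin r → ℕ),
      (∀ l, (f l).IsHomogeneous (dv l)) ∧ Ideal.span (Set.range f) = I ∧
      ∃ (s : ℕ) (σ : Fin s → (Fin r → MvPolynomial (Fin n) k)) (tv : Fin s → ℕ),
        (∀ a, tv a ≤ e + 1) ∧
        (∀ a l, if dv l ≤ tv a then (σ a l).IsHomogeneous (tv a - dv l) else σ a l = 0) ∧
        Submodule.span (MvPolynomial (Fin n) k) (Set.range σ)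
          = LinearMap.ker (Fintype.linearCombination (MvPolynomial (Fin n) k)
              f))
    -- a set of homogeneous algebra generators of `C`
    (S : Set (MvPolynomial (Fin n) k)) (hSC : S ⊆ (C : Set (MvPolynomial (Fin n) k)))
    (hShom : ∀ s ∈ S, ∃ d : ℕ, s.IsHomogeneous d)
    (hSgen : Algebra.adjoin k S = C) :
    Algebra.adjoin k {s ∈ S | ∃ d ≤ e, s.IsHomogeneous d} = C := by
  obtain ⟨π, hπ⟩ := hsplit
  obtain ⟨r, f, dv, hfhom, hfspan, s, σ, tv, htv, hσhom, hσspan⟩ := hsyz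
  set lowS : Set (MvPolynomial (Fin n) k) := {s ∈ S | ∃ d ≤ e, s.IsHomogeneous d} with hlowS
  set A : Subalgebra k (MvPolynomial (Fin n) k) := Algebra.adjoin k lowS with hA
  set K : Ideal (MvPolynomial (Fin n) k) := RingHom.ker (constantCoeff : MvPolynomial (Fin n) k →+* k) with hK
  set J : Ideal (MvPolynomial (Fin n) k) := K * I with hJ
  have hfI : ∀ l, f l ∈ I := fun l => hfspan ▸ Ideal.subset_span ⟨l, rfl⟩
  -- every homogeneous polynomial of degree ≥ e+2 lies in J = MvPolynomial (Fin n) k₊ * I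
  have homJ2 : ∀ d : ℕ, e + 2 ≤ d → ∀ p : MvPolynomial (Fin n) k, p.IsHomogeneous d → p ∈ J := by
    intro d hd p hp
    nth_rewrite 1 [p.as_sum]
    refine Ideal.sum_mem _ fun v hv => ?_
    have hcv : coeff v p ≠ 0 := by rwa [mem_support_iff] at hv
    have hdeg : v.degree = d := degOf hp hcv
    have hv0 : v ≠ 0 := by
      intro h; rw [h, map_zero] at hdeg; omega
    obtain ⟨i, hi⟩ : ∃ i, v i ≠ 0 := by
      by_contra h; push_neg at h
      exact hv0 (Finsupp.ext fun i => h i)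
    have hle : Finsupp.single i 1 ≤ v := by
      rw [Finsupp.single_le_iff]; omega
    have hsum : Finsupp.single i 1 + (v - Finsupp.single i 1) = v :=
      add_tsub_cancel_of_le hle
    have hmon : (monomial v (coeff v p) : MvPolynomial (Fin n) k)
        = X i * monomial (v - Finsupp.single i 1) (coeff v p) := by
      rw [X, monomial_mul, one_mul, hsum]
    rw [hmon]
    have hdeg' : (v - Finsupp.single i 1).degree = d - 1 := by
      have h1 : (Finsupp.single i (1:ℕ)).degree = 1 := by
        rw [Finsupp.degree_single]
      have := degAdd (Finsupp.single i 1) (v - Finsupp.single i 1)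
      rw [hsum, h1] at this; omega
    refine Submodule.mul_mem_mul ?_ ?_
    · rw [RingHom.mem_ker, constantCoeff_X]
    · exact he (d-1) (by omega) _ (isHomogeneous_monomial _ hdeg')
  -- THE KEY STEP: every generator of degree e+1 is in J
  have hgenJ : ∀ l : Fin r, dv l = e + 1 → f l ∈ J := by
    intro l₀ hdvl₀
    by_contra hfl₀
    -- a k-linear functional μ on MvPolynomial (Fin n) k vanishing on J with μ (f l₀) = 1
    have hexμ : ∃ μ : MvPolynomial (Fin n) k →ₗ[k] k, μ (f l₀) = 1 ∧ ∀ z ∈ J, μ z = 0 := by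
      set Jk : Submodule k (MvPolynomial (Fin n) k) := Submodule.restrictScalars k J with hJk
      set xq : (MvPolynomial (Fin n) k) ⧸ Jk := Submodule.Quotient.mk (f l₀) with hxqdef
      have hxq : xq ≠ 0 := by
        rw [hxqdef, ne_eq, Submodule.Quotient.mk_eq_zero]
        exact hfl₀
      obtain ⟨W, hW⟩ := Submodule.exists_isCompl (Submodule.span k {xq})
      set proj := Submodule.linearProjOfIsCompl _ W hW with hproj
      set ε := LinearEquiv.toSpanNonzeroSingleton k _ xq hxq with hε
      refine ⟨(ε.symm.toLinearMap ∘ₗ proj) ∘ₗ Jk.mkQ, ?_, ?_⟩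
      · have h1 : proj xq = ε 1 := by
          rw [hε, LinearEquiv.toSpanNonzeroSingleton_one]
          exact Submodule.linearProjOfIsCompl_apply_left hW
            ⟨xq, Submodule.mem_span_singleton_self xq⟩
        simp only [LinearMap.coe_comp, Function.comp_apply]
        rw [show Jk.mkQ (f l₀) = xq from rfl, h1]
        simp
      · intro z hz
        simp only [LinearMap.coe_comp, Function.comp_apply]
        have hz0 : Jk.mkQ z = 0 := by
          rw [Submodule.mkQ_apply, Submodule.Quotient.mk_eq_zero]
          exact hz
        rw [hz0, map_zero, map_zero]
    obtain ⟨μ, hμf, hμJ⟩ := hexμ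
    set cf : Fin r → k := fun l => if dv l = e + 1 then μ (f l) else 0 with hcf
    set Θ : (Fin r → MvPolynomial (Fin n) k) →ₗ[MvPolynomial (Fin n) k] MvPolynomial (Fin n) k :=
      Fintype.linearCombination (MvPolynomial (Fin n) k) (fun l => (MvPolynomial.C (cf l) : MvPolynomial (Fin n) k)) with hΘ
    have hΘσ : ∀ a, Θ (σ a) = 0 := by
      intro a
      rw [hΘ, Fintype.linearCombination_apply]
      by_cases hta : tv a = e + 1
      · set κ : Fin r → k := fun l => constantCoeff (σ a l) with hκ
        have hσC : ∀ l, dv l = e + 1 → σ a l = MvPolynomial.C (κ l) := by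
          intro l hdl
          have h := hσhom a l
          rw [if_pos (by omega)] at h
          have h0 : (σ a l).IsHomogeneous 0 := by
            rwa [hta, hdl, Nat.sub_self] at h
          exact eqC_of_hom0 h0
        have hwJ : (∑ l, if dv l = e + 1 then κ l • f l
            else (0 : MvPolynomial (Fin n) k)) ∈ J := by
          have h0 : (∑ l, σ a l • f l) = 0 := by
            have hmem : σ a ∈ Submodule.span (MvPolynomial (Fin n) k) (Set.range σ) :=
              Submodule.subset_span ⟨a, rfl⟩
            rw [hσspan] at hmem
            have h2 := LinearMap.mem_ker.1 hmem
            rwa [Fintype.linearCombination_apply] at h2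
          have hsplit2 : ∀ l : Fin r, σ a l • f l
              = (if dv l = e + 1 then κ l • f l else 0)
                + (if dv l = e + 1 then 0 else σ a l • f l) := by
            intro l
            split_ifs with hdl
            · rw [add_zero, hσC l hdl, smul_eq_mul, ← smul_eq_C_mul]
            · rw [zero_add]
          have hsum0 : (∑ l, if dv l = e + 1 then κ l • f l else (0 : MvPolynomial (Fin n) k))
              + (∑ l, if dv l = e + 1 then 0 else σ a l • f l) = 0 := by
            have hs := Finset.sum_congr rfl
              (fun l (_ : l ∈ (Finset.univ : Finset (Fin r))) => hsplit2 l)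
            rw [Finset.sum_add_distrib] at hs
            rw [← hs]
            exact h0
          have hrestJ : (∑ l, if dv l = e + 1 then 0 else σ a l • f l) ∈ J := by
            refine Ideal.sum_mem _ fun l _ => ?_
            split_ifs with hdl
            · exact J.zero_mem
            · rcases Nat.lt_or_ge (dv l) (e+1) with hlt | hge
              · have h := hσhom a l
                rw [if_pos (by omega)] at h
                rw [smul_eq_mul]
                refine Submodule.mul_mem_mul ?_ (hfI l)
                rw [RingHom.mem_ker]
                exact ccZero_of_homPos h (by omega)
              · have h := hσhom a l
                rw [if_neg (by omega)] at h
                rw [h, zero_smul]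
                exact J.zero_mem
          rw [eq_neg_of_add_eq_zero_left hsum0]
          exact Submodule.neg_mem _ hrestJ
        have hterm : ∀ l : Fin r, σ a l • (MvPolynomial.C (cf l) : MvPolynomial (Fin n) k)
            = MvPolynomial.C (if dv l = e + 1 then κ l * μ (f l) else 0) := by
          intro l
          split_ifs with hdl
          · rw [hσC l hdl, smul_eq_mul, ← MvPolynomial.C_mul]
            congr 1
            rw [hcf]
            simp [hdl]
          · rw [hcf]
            simp [hdl]
        calc (∑ l, σ a l • (MvPolynomial.C (cf l) : MvPolynomial (Fin n) k))
            = ∑ l, MvPolynomial.C (if dv l = e + 1 then κ l * μ (f l) else 0) :=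
              Finset.sum_congr rfl (fun l _ => hterm l)
          _ = MvPolynomial.C (∑ l, if dv l = e + 1 then κ l * μ (f l) else 0) := by
              rw [map_sum]
          _ = MvPolynomial.C (μ (∑ l, if dv l = e + 1 then κ l • f l else 0)) := by
              congr 1
              rw [map_sum]
              refine Finset.sum_congr rfl fun l _ => ?_
              split_ifs with hdl
              · rw [map_smul, smul_eq_mul]
              · rw [map_zero]
          _ = 0 := by rw [hμJ _ hwJ, map_zero]
      · apply Finset.sum_eq_zero
        intro l _
        by_cases hdl : dv l = e + 1
        · have h := hσhom a l
          have h2 := htv a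
          rw [if_neg (by omega)] at h
          rw [h, zero_smul]
        · rw [hcf]
          simp [hdl]
    have hker : ∀ τ : Fin r → MvPolynomial (Fin n) k, Fintype.linearCombination (MvPolynomial (Fin n) k) f τ = 0 → Θ τ = 0 := by
      intro τ hτ
      have hmem : τ ∈ Submodule.span (MvPolynomial (Fin n) k) (Set.range σ) := by
        rw [hσspan]; exact LinearMap.mem_ker.2 hτ
      have hle : Submodule.span (MvPolynomial (Fin n) k) (Set.range σ) ≤ LinearMap.ker Θ := by
        rw [Submodule.span_le]
        rintro _ ⟨a, rfl⟩
        exact LinearMap.mem_ker.2 (hΘσ a)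
      exact LinearMap.mem_ker.1 (hle hmem)
    -- every element of I is divisible by f l₀
    have hdvd : ∀ z ∈ I, ∃ q : MvPolynomial (Fin n) k, z = f l₀ * q := by
      intro z hz
      rw [← hfspan] at hz
      obtain ⟨h, hh⟩ := (Submodule.mem_span_range_iff_exists_fun (MvPolynomial (Fin n) k)).mp hz
      set w : Fin r → MvPolynomial (Fin n) k := fun l => if l = l₀ then z else 0 with hw
      have hτ : Fintype.linearCombination (MvPolynomial (Fin n) k) f (f l₀ • h - w) = 0 := by
        rw [map_sub, map_smul]
        rw [Fintype.linearCombination_apply, Fintype.linearCombination_apply]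
        rw [hh]
        have : (∑ l, w l • f l) = z * f l₀ := by
          rw [hw]
          simp only [ite_smul, zero_smul, smul_eq_mul, ite_mul, zero_mul]
          rw [Finset.sum_ite_eq' Finset.univ l₀ (fun l => z * f l)]
          simp
        rw [this, smul_eq_mul, mul_comm]
        ring
      have h0 := hker _ hτ
      rw [map_sub, map_smul] at h0
      have hΘw : Θ w = z := by
        rw [hΘ, Fintype.linearCombination_apply, hw]
        simp only [ite_smul, zero_smul]
        rw [Finset.sum_ite_eq' Finset.univ l₀ (fun l => z • (MvPolynomial.C (cf l) : MvPolynomial (Fin n) k))]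
        simp only [Finset.mem_univ, if_pos]
        rw [hcf]
        simp only [if_pos hdvl₀, hμf, map_one, smul_eq_mul, mul_one]
      rw [hΘw, sub_eq_zero, smul_eq_mul] at h0
      exact ⟨Θ h, h0.symm⟩
    -- contradiction via powers of two variables
    have h01 : (⟨0, by omega⟩ : Fin n) ≠ ⟨1, by omega⟩ := by
      intro h; simpa using congrArg Fin.val h
    set i0 : Fin n := ⟨0, by omega⟩
    set i1 : Fin n := ⟨1, by omega⟩
    have hfl₀hom : (f l₀).IsHomogeneous (e+1) := hdvl₀ ▸ hfhom l₀
    have hXmem : ∀ i : Fin n, ((X i : MvPolynomial (Fin n) k) ^ (e+1)) ∈ I :=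
      fun i => he (e+1) (by omega) _ (isHomogeneous_X_pow i (e+1))
    obtain ⟨q0, hq0⟩ := hdvd _ (hXmem i0)
    obtain ⟨q1, hq1⟩ := hdvd _ (hXmem i1)
    have hcomp : ∀ (i : Fin n) (q : MvPolynomial (Fin n) k), (X i : MvPolynomial (Fin n) k)^(e+1) = f l₀ * q →
        (X i : MvPolynomial (Fin n) k)^(e+1) = f l₀ * MvPolynomial.C (constantCoeff q) := by
      intro i q hq
      have hc := congrArg (homogeneousComponent (e+1)) hq
      rw [comp_same (isHomogeneous_X_pow i (e+1))] at hc
      rw [comp_mul hfl₀hom q (e+1), if_pos le_rfl, Nat.sub_self,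
        homogeneousComponent_zero] at hc
      exact hc
    have hc0 := hcomp i0 q0 hq0
    have hc1 := hcomp i1 q1 hq1
    have hmix : (X i0 : MvPolynomial (Fin n) k)^(e+1) * MvPolynomial.C (constantCoeff q1)
        = (X i1 : MvPolynomial (Fin n) k)^(e+1) * MvPolynomial.C (constantCoeff q0) := by
      rw [hc0, hc1]; ring
    have hco := congrArg (coeff (Finsupp.single i0 (e+1))) hmix
    rw [X_pow_eq_monomial, X_pow_eq_monomial, mul_comm, C_mul_monomial,
      mul_comm ((monomial (Finsupp.single i1 (e+1))) 1), C_mul_monomial,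
      coeff_monomial, coeff_monomial, if_pos rfl, mul_one] at hco
    rw [if_neg ?_] at hco
    · -- constantCoeff q1 = 0, so X i1 ^ (e+1) = 0, contradiction
      rw [hco, map_zero, mul_zero] at hc1
      exact pow_ne_zero (e+1) (X_ne_zero i1) hc1
    · intro hsg
      have := congrArg (fun g : Fin n →₀ ℕ => g i0) hsg
      simp only [Finsupp.single_eq_same] at this
      rw [Finsupp.single_eq_of_ne h01] at this
      omega
  -- every homogeneous polynomial of degree e+1 lies in J
  have homJ1 : ∀ p : MvPolynomial (Fin n) k, p.IsHomogeneous (e+1) → p ∈ J := by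
    intro p hp
    have hpI : p ∈ I := he _ (by omega) p hp
    rw [← hfspan] at hpI
    obtain ⟨h, hh⟩ := (Submodule.mem_span_range_iff_exists_fun (MvPolynomial (Fin n) k)).mp hpI
    have hrep : p = ∑ l, homogeneousComponent (e+1) (h l • f l) := by
      rw [← map_sum]
      rw [show (∑ l, h l • f l) = p from hh]
      exact (comp_same hp).symm
    rw [hrep]
    refine Ideal.sum_mem _ fun l _ => ?_
    have hterm : homogeneousComponent (e+1) (h l • f l)
        = if dv l ≤ e+1 then f l * homogeneousComponent (e+1 - dv l) (h l) else 0 := by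
      rw [smul_eq_mul, mul_comm]
      exact comp_mul (hfhom l) (h l) (e+1)
    rw [hterm]
    split_ifs with hle
    · rcases Nat.lt_or_ge (dv l) (e+1) with hlt | hge
      · rw [mul_comm]
        refine Submodule.mul_mem_mul ?_ (hfI l)
        rw [RingHom.mem_ker]
        exact ccZero_of_homPos (homogeneousComponent_isHomogeneous (e+1-dv l) (h l))
          (by omega)
      · have hdvl : dv l = e + 1 := by omega
        exact Ideal.mul_mem_right _ _ (hgenJ l hdvl)
    · exact J.zero_mem
  have homJ : ∀ d : ℕ, e < d → ∀ p : MvPolynomial (Fin n) k, p.IsHomogeneous d → p ∈ J := by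
    intro d hd p hp
    rcases Nat.lt_or_ge d (e+2) with h2 | h2
    · have : d = e + 1 := by omega
      exact homJ1 p (this ▸ hp)
    · exact homJ2 d h2 p hp
  -- J is contained in the k-span of products t * g with t ∈ MvPolynomial (Fin n) k₊, g ∈ C ∩ MvPolynomial (Fin n) k₊
  set S₂ : Set (MvPolynomial (Fin n) k) := {w : MvPolynomial (Fin n) k | ∃ t g : MvPolynomial (Fin n) k, constantCoeff t = 0 ∧ g ∈ C ∧ constantCoeff g = 0
    ∧ w = t * g} with hS₂
  have hJspan : ∀ z ∈ J, z ∈ Submodule.span k S₂ := by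
    intro z hz
    rw [hJ] at hz
    refine Submodule.mul_induction_on hz ?_ ?_
    · intro m hm p hpI
      rw [hI] at hpI
      have key : ∀ p ∈ Ideal.span ((C : Set (MvPolynomial (Fin n) k)) ∩ {b | constantCoeff b = 0}),
          ∀ m' ∈ K, m' * p ∈ Submodule.span k S₂ := by
        intro p hp
        refine Submodule.span_induction ?_ ?_ ?_ ?_ hp
        · intro x hx m' hm'
          exact Submodule.subset_span ⟨m', x, by rwa [RingHom.mem_ker] at hm', hx.1, hx.2, rfl⟩
        · intro m' _; rw [mul_zero]; exact Submodule.zero_mem _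
        · intro x y _ _ hx hy m' hm'
          rw [mul_add]
          exact Submodule.add_mem _ (hx m' hm') (hy m' hm')
        · intro b x _ hx m' hm'
          have : m' * (b • x) = (m' * b) * x := by
            rw [smul_eq_mul]; ring
          rw [this]
          exact hx (m' * b) (Ideal.mul_mem_right b _ hm')
      exact key p hpI m hm
    · intro x y hx hy
      exact Submodule.add_mem _ hx hy
  -- the k-linear retraction onto C, as a map MvPolynomial (Fin n) k → MvPolynomial (Fin n) k
  set πB : MvPolynomial (Fin n) k →ₗ[k] MvPolynomial (Fin n) k := C.val.toLinearMap ∘ₗ (π.restrictScalars k) with hπB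
  have hπBapp : ∀ z : MvPolynomial (Fin n) k, πB z = ((π z : ↥C) : MvPolynomial (Fin n) k) := fun z => rfl
  have hπBmem : ∀ z : MvPolynomial (Fin n) k, πB z ∈ C := fun z => (π z).2
  have hπBC : ∀ c ∈ C, πB c = c := by
    intro c hc
    have := hπ ⟨c, hc⟩
    rw [hπBapp, show ((⟨c, hc⟩ : ↥C) : MvPolynomial (Fin n) k) = c from rfl] at *
    rw [this]
  have hπBmul : ∀ (g : MvPolynomial (Fin n) k), g ∈ C → ∀ z : MvPolynomial (Fin n) k, πB (g * z) = g * πB z := by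
    intro g hg z
    have hsm : g * z = (⟨g, hg⟩ : ↥C) • z := rfl
    rw [hsm, hπBapp, map_smul]
    rfl
  -- main induction on degrees
  have main : ∀ d : ℕ, ∀ c : MvPolynomial (Fin n) k, c ∈ C → c.IsHomogeneous d → c ∈ A := by
    intro d
    induction d using Nat.strong_induction_on with
    | _ d IH =>
    intro c hcC hchom
    by_cases hd : d ≤ e
    · -- low degrees: use that C is generated by S
      have hcadj : c ∈ Algebra.adjoin k S := by rw [hSgen]; exact hcC
      have hcsp : c ∈ Submodule.span k (Submonoid.closure S : Set (MvPolynomial (Fin n) k)) := by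
        rw [← Algebra.adjoin_eq_span]; exact hcadj
      have hclo : ∀ w ∈ Submonoid.closure S,
          ∃ dw : ℕ, w.IsHomogeneous dw ∧ ∀ d' ≤ e, w.IsHomogeneous d' → w ∈ A := by
        intro w hw
        refine Submonoid.closure_induction ?_ ?_ ?_ hw
        · intro x hx
          obtain ⟨dx, hdx⟩ := hShom x hx
          exact ⟨dx, hdx, fun d' hd' hx' => Algebra.subset_adjoin ⟨hx, d', hd', hx'⟩⟩
        · exact ⟨0, isHomogeneous_one _ _, fun _ _ _ => one_mem _⟩
        · rintro x y hx hy ⟨dx, hdx, hxA⟩ ⟨dy, hdy, hyA⟩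
          refine ⟨dx + dy, hdx.mul hdy, fun d' hd' hxy => ?_⟩
          by_cases h0 : x * y = 0
          · rw [h0]; exact Subalgebra.zero_mem _
          · have hxne : x ≠ 0 := fun h => h0 (by rw [h, zero_mul])
            have hyne : y ≠ 0 := fun h => h0 (by rw [h, mul_zero])
            have hdeq : dx + dy = d' := (hdx.mul hdy).inj_right hxy h0
            exact Subalgebra.mul_mem _ (hxA dx (by omega) hdx) (hyA dy (by omega) hdy)
      have himg : ∀ w ∈ Submonoid.closure S, homogeneousComponent d w ∈ A := by
        intro w hw
        obtain ⟨dw, hwhom, hwA⟩ := hclo w hw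
        rw [homogeneousComponent_of_mem ((mem_homogeneousSubmodule dw w).2 hwhom)]
        split_ifs with hddw
        · exact hwA d hd (hddw ▸ hwhom)
        · exact Subalgebra.zero_mem _
      have : homogeneousComponent d c ∈ Submodule.map (homogeneousComponent d)
          (Submodule.span k (Submonoid.closure S : Set (MvPolynomial (Fin n) k))) :=
        Submodule.mem_map_of_mem hcsp
      rw [Submodule.map_span] at this
      rw [comp_same hchom] at this
      have hsub : (homogeneousComponent d) '' (Submonoid.closure S : Set (MvPolynomial (Fin n) k))
          ⊆ (Subalgebra.toSubmodule A : Set (MvPolynomial (Fin n) k)) := by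
        rintro _ ⟨w, hw, rfl⟩
        exact himg w hw
      exact Submodule.span_le.mpr hsub this
    · -- high degrees
      push_neg at hd
      have hcJ : c ∈ J := homJ d hd c hchom
      have hcsp := hJspan c hcJ
      set Φ : MvPolynomial (Fin n) k →ₗ[k] MvPolynomial (Fin n) k := (homogeneousComponent d) ∘ₗ πB ∘ₗ (homogeneousComponent d)
        with hΦ
      have hΦc : Φ c = c := by
        rw [hΦ]
        simp only [LinearMap.coe_comp, Function.comp_apply]
        rw [comp_same hchom, hπBC c hcC, comp_same hchom]
      have hΦS₂ : ∀ w ∈ S₂, Φ w ∈ A := by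
        rintro _ ⟨t, g, hct, hgC, hcg, rfl⟩
        have hgdec : t * g = ∑ a ∈ Finset.range (g.totalDegree + 1),
            homogeneousComponent a g * t := by
          rw [mul_comm, ← Finset.sum_mul, sum_homogeneousComponent]
        rw [hΦ]
        simp only [LinearMap.coe_comp, Function.comp_apply]
        rw [hgdec, map_sum, map_sum, map_sum]
        refine Subalgebra.sum_mem _ fun a _ => ?_
        set ga : MvPolynomial (Fin n) k := homogeneousComponent a g with hga
        have hgahom : ga.IsHomogeneous a := homogeneousComponent_isHomogeneous a g
        have hgaC : ga ∈ C := hCgraded g hgC a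
        rcases Nat.lt_or_ge d a with hda | hda
        · -- a > d : the component vanishes
          rw [comp_mul hgahom t d, if_neg (by omega)]
          rw [map_zero, map_zero]
          exact Subalgebra.zero_mem _
        · rw [comp_mul hgahom t d, if_pos hda]
          rw [hπBmul ga hgaC, comp_mul hgahom _ d, if_pos hda]
          rcases Nat.eq_zero_or_pos a with ha0 | hapos
          · -- a = 0 : ga = MvPolynomial.C (constantCoeff g) = 0
            have : ga = 0 := by
              rw [hga, ha0, homogeneousComponent_zero]
              rw [show coeff 0 g = constantCoeff g from rfl, hcg, map_zero]
            rw [this, zero_mul]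
            exact Subalgebra.zero_mem _
          rcases Nat.eq_or_lt_of_le hda with had | had
          · -- a = d : the inner component of t is the constant term of t, which is 0
            have h0 : homogeneousComponent (d - a) t = 0 := by
              rw [← had, Nat.sub_self, homogeneousComponent_zero,
                show coeff 0 t = constantCoeff t from rfl, hct, map_zero]
            rw [h0, map_zero, map_zero, mul_zero]
            exact Subalgebra.zero_mem _
          · -- 1 ≤ a < d
            set q : MvPolynomial (Fin n) k := homogeneousComponent (d - a) (πB (homogeneousComponent (d - a) t))
              with hq
            have hqC : q ∈ C := hCgraded _ (hπBmem _) _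
            have hqhom : q.IsHomogeneous (d - a) := homogeneousComponent_isHomogeneous _ _
            have hgaA : ga ∈ A := IH a (by omega) ga hgaC hgahom
            have hqA : q ∈ A := IH (d - a) (by omega) q hqC hqhom
            exact Subalgebra.mul_mem _ hgaA hqA
      have : Φ c ∈ Submodule.map Φ (Submodule.span k S₂) :=
        Submodule.mem_map_of_mem hcsp
      rw [Submodule.map_span, hΦc] at this
      have hsub : Φ '' S₂ ⊆ (Subalgebra.toSubmodule A : Set (MvPolynomial (Fin n) k)) := by
        rintro _ ⟨w, hw, rfl⟩
        exact hΦS₂ w hw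
      exact Submodule.span_le.mpr hsub this
  -- conclude
  apply le_antisymm
  · exact Algebra.adjoin_le fun x hx => hSC hx.1
  · intro c hc
    have hsummem : (∑ i ∈ Finset.range (c.totalDegree + 1), homogeneousComponent i c) ∈ A :=
      Subalgebra.sum_mem _ fun i _ =>
        main i _ (hCgraded c hc i) (homogeneousComponent_isHomogeneous i c)
    rwa [sum_homogeneousComponent] at hsummem
end
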